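/- Let (M_k)_{k≥1} be invertible real n×n matrices, (Ω_k)_{k≥0} real symmetric positive semi-definite n×n matrices, and P_0 any real symmetric positive semi-definite n×n matrix. Define P_{k+1} = M_{k+1}(I + P_kΩ_k)⁻¹P_kM_{k+1}ᵀ. Let M_{l:0} = M_l⋯M_1 (with M_{0:0} = I) and Θ_k = Σ_{l=0}^{k-1} M_{l:0}ᵀΩ_lM_{l:0}. Then for every k ≥ 0 the matrix I + Θ_kP_0 is invertible and P_k = M_{k:0}P_0(I + Θ_kP_0)⁻¹M_{k:0}ᵀ. -/

import Mathlib

open Matrix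

/-- `Mres M l j` is the resolvent `M_{(l+j):l} = M_{l+j} ⋯ M_{l+1}`, so that
`M_{l:0} = Mres M 0 l` and `M_{0:0} = 1`. -/
def Mres {n : ℕ} (M : ℕ → Matrix (Fin n) (Fin n) ℝ) (l : ℕ) :
    ℕ → Matrix (Fin n) (Fin n) ℝ
  | 0 => 1
  | j + 1 => M (l + j + 1) * Mres M l j

/-- The observability matrix pulled back to initial time:
`Θ_k = Σ_{l=0}^{k-1} M_{l:0}ᵀ * Ω_l * M_{l:0}`. -/
noncomputable def Theta {n : ℕ} (M Ω : ℕ → Matrix (Fin n) (Fin n) ℝ) (k : ℕ) :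
    Matrix (Fin n) (Fin n) ℝ :=
  ∑ l ∈ Finset.range k, (Mres M 0 l)ᵀ * Ω l * Mres M 0 l

section Aux

variable {n : ℕ}

private lemma ct_eq (A : Matrix (Fin n) (Fin n) ℝ) : Aᴴ = Aᵀ := by
  ext i j; simp [Matrix.conjTranspose_apply]

private lemma psd_tr {A : Matrix (Fin n) (Fin n) ℝ} (hA : A.PosSemidef) : Aᵀ = A := by
  rw [← ct_eq]; exact hA.1

private lemma mul_inv_c {B : Matrix (Fin n) (Fin n) ℝ} (h : IsUnit B) : B * B⁻¹ = 1 :=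
  Matrix.mul_nonsing_inv _ ((Matrix.isUnit_iff_isUnit_det _).mp h)

private lemma inv_mul_c {B : Matrix (Fin n) (Fin n) ℝ} (h : IsUnit B) : B⁻¹ * B = 1 :=
  Matrix.nonsing_inv_mul _ ((Matrix.isUnit_iff_isUnit_det _).mp h)

/-- For psd `S`, `T`, the matrix `1 + S*T` is invertible. -/
private lemma psd_unit {S T : Matrix (Fin n) (Fin n) ℝ} (hS : S.PosSemidef)
    (hT : T.PosSemidef) : IsUnit (1 + S * T) := by
  rw [Matrix.isUnit_iff_isUnit_det, isUnit_iff_ne_zero]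
  intro hdet
  obtain ⟨v, hv, h0⟩ := Matrix.exists_mulVec_eq_zero_iff.mpr hdet
  rw [Matrix.add_mulVec, Matrix.one_mulVec, ← Matrix.mulVec_mulVec] at h0
  have hv' : v = -(S *ᵥ (T *ᵥ v)) := eq_neg_of_add_eq_zero_left h0
  set y := T *ᵥ v with hy
  have h1 : 0 ≤ v ⬝ᵥ y := by simpa [hy] using hT.dotProduct_mulVec_nonneg v
  have h2 : 0 ≤ y ⬝ᵥ (S *ᵥ y) := by simpa using hS.dotProduct_mulVec_nonneg y
  have h3 : v ⬝ᵥ y = -(y ⬝ᵥ (S *ᵥ y)) := by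
    calc v ⬝ᵥ y = y ⬝ᵥ v := dotProduct_comm _ _
    _ = y ⬝ᵥ (-(S *ᵥ y)) := by rw [← hv']
    _ = -(y ⬝ᵥ (S *ᵥ y)) := dotProduct_neg _ _
  have h4 : v ⬝ᵥ (T *ᵥ v) = 0 := by
    have : v ⬝ᵥ y ≤ 0 := by rw [h3]; linarith
    exact le_antisymm (by simpa [hy] using this) h1
  have h5 : T *ᵥ v = 0 := by
    have := (hT.dotProduct_mulVec_zero_iff v).mp (by simpa using h4)
    exact this
  rw [← hy] at h5
  rw [h5, Matrix.mulVec_zero, neg_zero] at hv'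
  exact hv hv'

/-- For psd `Pm`, `Om`, the matrix `(1 + Pm*Om)⁻¹ * Pm` is psd. -/
private lemma Q_psd {Pm Om : Matrix (Fin n) (Fin n) ℝ} (hP : Pm.PosSemidef)
    (hO : Om.PosSemidef) : ((1 + Pm * Om)⁻¹ * Pm).PosSemidef := by
  set C := (1 + Pm * Om)⁻¹ with hC
  have hU2 : IsUnit (1 + Om * Pm) := psd_unit hO hP
  have hCt : Cᴴ = (1 + Om * Pm)⁻¹ := by
    rw [ct_eq, hC, Matrix.transpose_nonsing_inv, Matrix.transpose_add,
      Matrix.transpose_one, Matrix.transpose_mul, psd_tr hP, psd_tr hO]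
  have hInner : (Pm + Pm * Om * Pm).PosSemidef := by
    have := hO.mul_mul_conjTranspose_same Pm
    rw [ct_eq, psd_tr hP] at this
    exact hP.add this
  have key : C * Pm = C * (Pm + Pm * Om * Pm) * Cᴴ := by
    rw [hCt]
    have : Pm + Pm * Om * Pm = Pm * (1 + Om * Pm) := by noncomm_ring
    rw [this, Matrix.mul_assoc C, Matrix.mul_assoc Pm, mul_inv_c hU2, Matrix.mul_one]
  rw [key]
  exact hInner.mul_mul_conjTranspose_same C

end Aux

theorem kf_closed_form_theta {n : ℕ}
    (M Ω : ℕ → Matrix (Fin n) (Fin n) ℝ)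
    (hM : ∀ k, 1 ≤ k → IsUnit (M k)) (hΩ : ∀ k, (Ω k).PosSemidef)
    (P : ℕ → Matrix (Fin n) (Fin n) ℝ) (hP0 : (P 0).PosSemidef)
    (hrec : ∀ k, P (k + 1)
      = M (k + 1) * (1 + P k * Ω k)⁻¹ * P k * (M (k + 1))ᵀ) :
    ∀ k, IsUnit (1 + Theta M Ω k * P 0) ∧
      P k = Mres M 0 k * P 0 * (1 + Theta M Ω k * P 0)⁻¹ * (Mres M 0 k)ᵀ := by
  -- `Theta` is positive semidefinite
  have hTheta : ∀ k, (Theta M Ω k).PosSemidef := by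
    intro k
    induction k with
    | zero => simpa [Theta] using (Matrix.PosSemidef.zero : (0 : Matrix (Fin n) (Fin n) ℝ).PosSemidef)
    | succ k ih =>
      have h : ((Mres M 0 k)ᵀ * Ω k * Mres M 0 k).PosSemidef := by
        have := (hΩ k).conjTranspose_mul_mul_same (Mres M 0 k)
        rwa [ct_eq] at this
      have : Theta M Ω (k + 1) = Theta M Ω k + (Mres M 0 k)ᵀ * Ω k * Mres M 0 k := by
        rw [Theta, Theta, Finset.sum_range_succ]
      rw [this]
      exact ih.add h
  -- strengthened induction: `P k` is psd and the closed form holds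
  have key : ∀ k, (P k).PosSemidef ∧
      P k = Mres M 0 k * P 0 * (1 + Theta M Ω k * P 0)⁻¹ * (Mres M 0 k)ᵀ := by
    intro k
    induction k with
    | zero =>
      refine ⟨hP0, ?_⟩
      show P 0 = Mres M 0 0 * P 0 * (1 + Theta M Ω 0 * P 0)⁻¹ * (Mres M 0 0)ᵀ
      simp [Mres, Theta]
    | succ k ih =>
      obtain ⟨hPk, hfk⟩ := ih
      set A := Mres M 0 k with hA
      set B := 1 + Theta M Ω k * P 0 with hB
      set S := Aᵀ * Ω k * A with hS
      set B' := 1 + Theta M Ω (k + 1) * P 0 with hB'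
      have hBu : IsUnit B := psd_unit (hTheta k) hP0
      have hB'u : IsUnit B' := psd_unit (hTheta (k + 1)) hP0
      have hB'eq : B' = B + S * P 0 := by
        rw [hB', hB, hS, hA, Theta, Finset.sum_range_succ, ← Theta, Matrix.add_mul, add_assoc]
      have hUk : IsUnit (1 + P k * Ω k) := psd_unit hPk (hΩ k)
      -- key identity
      have hmid : P 0 + P 0 * B⁻¹ * S * P 0 = P 0 * B⁻¹ * B' := by
        rw [hB'eq, Matrix.mul_add, Matrix.mul_assoc (P 0 * B⁻¹) S (P 0),
          Matrix.mul_assoc (P 0) B⁻¹ B, inv_mul_c hBu, Matrix.mul_one,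
          ← Matrix.mul_assoc (P 0 * B⁻¹) S (P 0)]
      have hmain : (1 + P k * Ω k) * (A * P 0 * B'⁻¹ * Aᵀ) = P k := by
        rw [hfk]
        calc (1 + A * P 0 * B⁻¹ * Aᵀ * Ω k) * (A * P 0 * B'⁻¹ * Aᵀ)
            = A * ((P 0 + P 0 * B⁻¹ * S * P 0) * B'⁻¹) * Aᵀ := by
              rw [hS]; noncomm_ring
          _ = A * (P 0 * B⁻¹ * (B' * B'⁻¹)) * Aᵀ := by
              rw [hmid, Matrix.mul_assoc (P 0 * B⁻¹) B' B'⁻¹]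
          _ = A * P 0 * B⁻¹ * Aᵀ := by
              rw [mul_inv_c hB'u, Matrix.mul_one, Matrix.mul_assoc A (P 0) B⁻¹]
      have hX : (1 + P k * Ω k)⁻¹ * P k = A * P 0 * B'⁻¹ * Aᵀ := by
        calc (1 + P k * Ω k)⁻¹ * P k
            = (1 + P k * Ω k)⁻¹ * ((1 + P k * Ω k) * (A * P 0 * B'⁻¹ * Aᵀ)) := by
              rw [hmain]
          _ = A * P 0 * B'⁻¹ * Aᵀ := by
              rw [← Matrix.mul_assoc, inv_mul_c hUk, Matrix.one_mul]
      have hMres : Mres M 0 (k + 1) = M (k + 1) * A := by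
        rw [hA]; show M (0 + k + 1) * Mres M 0 k = M (k + 1) * Mres M 0 k
        rw [Nat.zero_add]
      constructor
      · -- psd of P (k+1)
        have hQ := (Q_psd hPk (hΩ k)).mul_mul_conjTranspose_same (M (k + 1))
        rw [ct_eq] at hQ
        have : P (k + 1) = M (k + 1) * ((1 + P k * Ω k)⁻¹ * P k) * (M (k + 1))ᵀ := by
          rw [hrec k, Matrix.mul_assoc (M (k + 1))]
        rw [this]
        exact hQ
      · rw [hrec k, Matrix.mul_assoc (M (k + 1)), hX, hMres, Matrix.transpose_mul]
        noncomm_ring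
  intro k
  exact ⟨psd_unit (hTheta k) hP0, (key k).2⟩
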